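/- For any f : X → ℝ^L, a bounded loss ℓ with ‖ℓ(f(x))‖_∞ ≤ 1 for all x, and teacher p^t, the expected squared deviation of the distilled empirical risk from the population risk satisfies E[(R̃(f;S) − R(f))^2] ≤ (1/N)·Var[p^t(x)^T ℓ(f(x))] + L·(E[‖p^t(x) − p*(x)‖_2])^2. -/

import Mathlib

open MeasureTheory ProbabilityTheory


lemma aux_prod_integral {𝒳 : Type*} [MeasurableSpace 𝒳] {N : ℕ}
    (μ : Measure 𝒳) [IsProbabilityMeasure μ] (F : Fin N → 𝒳 → ℝ) :
    ∫ S : Fin N → 𝒳, ∏ i, F i (S i) ∂(Measure.pi fun _ : Fin N => μ)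
      = ∏ i, ∫ x, F i x ∂μ := by
  letI : MeasureSpace 𝒳 := ⟨μ⟩
  have h : (Measure.pi fun _ : Fin N => μ) = (volume : Measure (Fin N → 𝒳)) := by
    rw [volume_pi]; rfl
  rw [h]
  exact MeasureTheory.integral_fintype_prod_eq_prod F

lemma aux_eval_integral {𝒳 : Type*} [MeasurableSpace 𝒳] {N : ℕ}
    (μ : Measure 𝒳) [IsProbabilityMeasure μ] (F : 𝒳 → ℝ) (n : Fin N) :
    ∫ S : Fin N → 𝒳, F (S n) ∂(Measure.pi fun _ : Fin N => μ) = ∫ x, F x ∂μ := by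
  have h := aux_prod_integral μ (fun i x => if i = n then F x else 1)
  simp only [Finset.prod_ite_eq', Finset.mem_univ, if_true] at h
  rw [h]
  have hfac : ∀ i : Fin N, (∫ x, (if i = n then F x else 1) ∂μ)
      = if i = n then ∫ x, F x ∂μ else 1 := by
    intro i; by_cases h1 : i = n <;> simp [h1]
  rw [Finset.prod_congr rfl fun i _ => hfac i]
  simp [Finset.prod_ite_eq']

lemma aux_eval2_integral {𝒳 : Type*} [MeasurableSpace 𝒳] {N : ℕ}
    (μ : Measure 𝒳) [IsProbabilityMeasure μ] (F G : 𝒳 → ℝ) {n m : Fin N} (hnm : n ≠ m) :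
    ∫ S : Fin N → 𝒳, F (S n) * G (S m) ∂(Measure.pi fun _ : Fin N => μ)
      = (∫ x, F x ∂μ) * ∫ x, G x ∂μ := by
  have h := aux_prod_integral μ
    (fun i x => (if i = n then F x else 1) * (if i = m then G x else 1))
  have hprod : ∀ S : Fin N → 𝒳,
      (∏ i, (if i = n then F (S i) else 1) * (if i = m then G (S i) else 1))
        = F (S n) * G (S m) := by
    intro S
    rw [Finset.prod_mul_distrib]
    simp [Finset.prod_ite_eq']
  simp only [hprod] at h
  rw [h]
  have hfac : ∀ i : Fin N,
      (∫ x, (if i = n then F x else 1) * (if i = m then G x else 1) ∂μ)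
        = (if i = n then ∫ x, F x ∂μ else 1) * (if i = m then ∫ x, G x ∂μ else 1) := by
    intro i
    by_cases h1 : i = n
    · subst h1; simp [hnm]
    · by_cases h2 : i = m
      · subst h2; simp [h1]
      · simp [h1, h2]
  rw [Finset.prod_congr rfl fun i _ => hfac i, Finset.prod_mul_distrib]
  simp [Finset.prod_ite_eq']

lemma aux_mean_sq {𝒳 : Type*} [MeasurableSpace 𝒳] {N : ℕ} (hN : 0 < N)
    (μ : Measure 𝒳) [IsProbabilityMeasure μ]
    (g : 𝒳 → ℝ) (hg : Measurable g) (C : ℝ) (hC : ∀ x, |g x| ≤ C) :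
    ∫ S : Fin N → 𝒳, ((N : ℝ)⁻¹ * ∑ n, g (S n) - ∫ x, g x ∂μ) ^ 2
      ∂(Measure.pi fun _ : Fin N => μ) = (N : ℝ)⁻¹ * variance g μ := by
  set m := ∫ x, g x ∂μ with hm
  set Y : 𝒳 → ℝ := fun x => g x - m with hY
  have hNne : (N : ℝ) ≠ 0 := Nat.cast_ne_zero.mpr hN.ne'
  have hgint : Integrable g μ := by
    refine Integrable.mono' (integrable_const C) hg.aestronglyMeasurable ?_
    exact Filter.Eventually.of_forall fun x => (Real.norm_eq_abs _ ▸ hC x)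
  have hYmeas : Measurable Y := hg.sub measurable_const
  have hYbd : ∀ x, |Y x| ≤ C + |m| := fun x =>
    (abs_sub _ _).trans (add_le_add (hC x) le_rfl)
  have hYint : Integrable Y μ := hgint.sub (integrable_const m)
  have hY0 : ∫ x, Y x ∂μ = 0 := by
    rw [integral_sub hgint (integrable_const m)]
    simp [hm]
  have hYmem : MemLp Y 2 μ :=
    MemLp.of_bound hYmeas.aestronglyMeasurable (C + |m|)
      (Filter.Eventually.of_forall fun x => Real.norm_eq_abs _ ▸ hYbd x)
  have hgmem : MemLp g 2 μ :=
    MemLp.of_bound hg.aestronglyMeasurable C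
      (Filter.Eventually.of_forall fun x => Real.norm_eq_abs _ ▸ hC x)
  have hVar : variance g μ = ∫ x, Y x * Y x ∂μ := by
    rw [variance_eq_integral hgmem.aemeasurable]
    congr 1
    ext x
    simp [hY, sq, hm]
  -- key covariance computation
  have key : ∀ n m' : Fin N,
      ∫ S : Fin N → 𝒳, Y (S n) * Y (S m') ∂(Measure.pi fun _ : Fin N => μ)
        = if n = m' then variance g μ else 0 := by
    intro n m'
    by_cases h : n = m'
    · subst h
      rw [if_pos rfl, aux_eval_integral μ (fun x => Y x * Y x) n, hVar]
    · rw [if_neg h, aux_eval2_integral μ Y Y h, hY0, mul_zero]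
  -- rewrite the integrand
  have hrw : ∀ S : Fin N → 𝒳,
      ((N : ℝ)⁻¹ * ∑ n, g (S n) - m) ^ 2
        = ((N : ℝ)⁻¹) ^ 2 * ∑ n, ∑ m', Y (S n) * Y (S m') := by
    intro S
    have h1 : (N : ℝ)⁻¹ * ∑ n, g (S n) - m = (N : ℝ)⁻¹ * ∑ n, Y (S n) := by
      simp only [hY, Finset.sum_sub_distrib, Finset.sum_const, Finset.card_univ,
        Fintype.card_fin, nsmul_eq_mul, mul_sub]
      field_simp
    rw [h1, mul_pow, sq (∑ n, Y (S n)), Finset.sum_mul_sum]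
  simp only [hrw]
  have hint : ∀ n m' : Fin N,
      Integrable (fun S : Fin N → 𝒳 => Y (S n) * Y (S m'))
        (Measure.pi fun _ : Fin N => μ) := by
    intro n m'
    refine Integrable.mono' (integrable_const ((C + |m|) * (C + |m|)))
      (((hYmeas.comp (measurable_pi_apply n)).mul
        (hYmeas.comp (measurable_pi_apply m'))).aestronglyMeasurable)
      (Filter.Eventually.of_forall fun S => ?_)
    rw [Real.norm_eq_abs, abs_mul]
    exact mul_le_mul (hYbd _) (hYbd _) (abs_nonneg _)
      ((abs_nonneg (Y (S n))).trans (hYbd (S n)))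
  rw [MeasureTheory.integral_const_mul, integral_finset_sum _ fun n _ =>
    integrable_finset_sum _ fun m' _ => hint n m']
  rw [Finset.sum_congr rfl fun n _ => integral_finset_sum _ fun m' _ => hint n m']
  simp only [key]
  simp only [Finset.sum_ite_eq, Finset.mem_univ, if_true, Finset.sum_const,
    Finset.card_univ, Fintype.card_fin, nsmul_eq_mul]
  field_simp

/-- Bias-variance tradeoff for distillation with a fixed teacher `pt` and bounded loss
(`‖ℓ(f(x))‖_∞ ≤ 1`): the mean squared deviation of the distilled empirical risk from
the population risk is at most
`(1/N)·Var[p^t(x)^T ℓ(f(x))] + L·(E‖p^t(x) − p*(x)‖₂)²`. -/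
theorem stmt9 {𝒳 : Type*} [MeasurableSpace 𝒳] {L N : ℕ} (hN : 0 < N)
    (μ : Measure 𝒳) [IsProbabilityMeasure μ]
    (pstar pt : 𝒳 → Fin L → ℝ)
    (ℓ : Fin L → (Fin L → ℝ) → ℝ) (f : 𝒳 → Fin L → ℝ)
    (hℓ : ∀ x y, |ℓ y (f x)| ≤ 1)
    (hmeas : Measurable fun x => ∑ y, pt x y * ℓ y (f x))
    (hmeas' : Measurable fun x => ∑ y, pstar x y * ℓ y (f x))
    (hmeas'' : Measurable fun x => Real.sqrt (∑ y, (pt x y - pstar x y) ^ 2))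
    (hbdd : ∃ C, (∀ x, |∑ y, pt x y * ℓ y (f x)| ≤ C)
              ∧ (∀ x, |∑ y, pstar x y * ℓ y (f x)| ≤ C)
              ∧ ∀ x, Real.sqrt (∑ y, (pt x y - pstar x y) ^ 2) ≤ C) :
    ∫ S : Fin N → 𝒳,
        ((N : ℝ)⁻¹ * (∑ n, ∑ y, pt (S n) y * ℓ y (f (S n)))
          - ∫ x, ∑ y, pstar x y * ℓ y (f x) ∂μ) ^ 2
        ∂(Measure.pi fun _ : Fin N => μ)
      ≤ (N : ℝ)⁻¹ * variance (fun x => ∑ y, pt x y * ℓ y (f x)) μ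
        + (L : ℝ) * (∫ x, Real.sqrt (∑ y, (pt x y - pstar x y) ^ 2) ∂μ) ^ 2 := by
  obtain ⟨C, hC1, hC2, hC3⟩ := hbdd
  set g : 𝒳 → ℝ := fun x => ∑ y, pt x y * ℓ y (f x) with hgdef
  set h : 𝒳 → ℝ := fun x => ∑ y, pstar x y * ℓ y (f x) with hhdef
  set q : 𝒳 → ℝ := fun x => Real.sqrt (∑ y, (pt x y - pstar x y) ^ 2) with hqdef
  set mt := ∫ x, g x ∂μ with hmt
  set ms := ∫ x, h x ∂μ with hms
  set b := mt - ms with hb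
  set PiM := Measure.pi fun _ : Fin N => μ with hPM
  have hNne : (N : ℝ) ≠ 0 := Nat.cast_ne_zero.mpr hN.ne'
  have hgint : Integrable g μ :=
    Integrable.mono' (integrable_const C) hmeas.aestronglyMeasurable
      (Filter.Eventually.of_forall fun x => Real.norm_eq_abs _ ▸ hC1 x)
  have hhint : Integrable h μ :=
    Integrable.mono' (integrable_const C) hmeas'.aestronglyMeasurable
      (Filter.Eventually.of_forall fun x => Real.norm_eq_abs _ ▸ hC2 x)
  have hqint : Integrable q μ :=
    Integrable.mono' (integrable_const C) hmeas''.aestronglyMeasurable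
      (Filter.Eventually.of_forall fun x => by
        rw [Real.norm_eq_abs, abs_of_nonneg (Real.sqrt_nonneg _)]; exact hC3 x)
  -- the empirical deviation from the teacher mean
  set A : (Fin N → 𝒳) → ℝ := fun S => (N : ℝ)⁻¹ * ∑ n, g (S n) - mt with hA
  have hAmeas : Measurable A := by
    apply Measurable.sub _ measurable_const
    exact measurable_const.mul (Finset.measurable_sum _ fun n _ =>
      hmeas.comp (measurable_pi_apply n))
  have hAbd : ∀ S, |A S| ≤ C + |mt| := by
    intro S
    refine (abs_sub _ _).trans (add_le_add ?_ le_rfl)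
    rw [abs_mul, abs_inv, Nat.abs_cast]
    calc (N : ℝ)⁻¹ * |∑ n, g (S n)| ≤ (N : ℝ)⁻¹ * (N * C) := by
          gcongr
          · refine (Finset.abs_sum_le_sum_abs _ _).trans ?_
            calc (∑ n : Fin N, |g (S n)|) ≤ ∑ n : Fin N, C :=
                  Finset.sum_le_sum fun n _ => hC1 _
              _ = N * C := by simp [Finset.sum_const, mul_comm]
      _ = C := by field_simp
  have hAint : Integrable A PiM :=
    Integrable.mono' (integrable_const (C + |mt|)) hAmeas.aestronglyMeasurable
      (Filter.Eventually.of_forall fun S => Real.norm_eq_abs _ ▸ hAbd S)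
  have hA2int : Integrable (fun S => A S ^ 2) PiM :=
    Integrable.mono' (integrable_const ((C + |mt|) ^ 2))
      (hAmeas.pow_const 2).aestronglyMeasurable
      (Filter.Eventually.of_forall fun S => by
        rw [Real.norm_eq_abs, abs_pow]
        exact pow_le_pow_left₀ (abs_nonneg _) (hAbd S) 2)
  -- ∫ A = 0
  have hgeval_int : ∀ n : Fin N, Integrable (fun S : Fin N → 𝒳 => g (S n)) PiM := by
    intro n
    exact Integrable.mono' (integrable_const C)
      (hmeas.comp (measurable_pi_apply n)).aestronglyMeasurable
      (Filter.Eventually.of_forall fun S => Real.norm_eq_abs _ ▸ hC1 _)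
  have hAzero : ∫ S, A S ∂PiM = 0 := by
    rw [hA]
    rw [integral_sub (by
        exact Integrable.const_mul (integrable_finset_sum _ fun n _ => hgeval_int n) _)
      (integrable_const mt)]
    rw [MeasureTheory.integral_const_mul,
      integral_finset_sum _ fun n _ => hgeval_int n]
    rw [Finset.sum_congr rfl fun n _ => aux_eval_integral μ g n]
    simp [hPM]
    field_simp
    exact sub_self _
  -- variance term
  have hvar : ∫ S, A S ^ 2 ∂PiM = (N : ℝ)⁻¹ * variance g μ :=
    aux_mean_sq hN μ g hmeas C hC1
  -- decomposition
  have hdecomp : ∫ S : Fin N → 𝒳,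
      ((N : ℝ)⁻¹ * ∑ n, g (S n) - ms) ^ 2 ∂PiM
        = (N : ℝ)⁻¹ * variance g μ + b ^ 2 := by
    have hrw : ∀ S : Fin N → 𝒳,
        ((N : ℝ)⁻¹ * ∑ n, g (S n) - ms) ^ 2 = A S ^ 2 + (2 * b * A S + b ^ 2) := by
      intro S; rw [hA, hb]; ring
    simp only [hrw]
    rw [integral_add hA2int (by
        exact Integrable.add (hAint.const_mul _) (integrable_const _))]
    rw [integral_add (hAint.const_mul _) (integrable_const _)]
    rw [MeasureTheory.integral_const_mul, hAzero, hvar]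
    simp
  -- bias bound
  have hpoint : ∀ x, |g x - h x| ≤ Real.sqrt L * q x := by
    intro x
    have hdiff : g x - h x = ∑ y, (pt x y - pstar x y) * ℓ y (f x) := by
      rw [hgdef, hhdef]
      rw [← Finset.sum_sub_distrib]
      exact Finset.sum_congr rfl fun y _ => by ring
    have hsq : (g x - h x) ^ 2 ≤ (∑ y, (pt x y - pstar x y) ^ 2) * L := by
      rw [hdiff]
      refine (Finset.sum_mul_sq_le_sq_mul_sq _ _ _).trans ?_
      gcongr
      calc (∑ y, ℓ y (f x) ^ 2) ≤ ∑ y : Fin L, 1 := by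
            refine Finset.sum_le_sum fun y _ => ?_
            rw [← sq_abs]
            exact pow_le_one₀ (abs_nonneg _) (hℓ x y)
        _ = L := by simp
    have h1 : |g x - h x| = Real.sqrt ((g x - h x) ^ 2) := by
      rw [Real.sqrt_sq_eq_abs]
    rw [h1]
    calc Real.sqrt ((g x - h x) ^ 2)
        ≤ Real.sqrt ((∑ y, (pt x y - pstar x y) ^ 2) * L) := Real.sqrt_le_sqrt hsq
      _ = q x * Real.sqrt L := by
          rw [Real.sqrt_mul (Finset.sum_nonneg fun y _ => sq_nonneg _)]
      _ = Real.sqrt L * q x := mul_comm _ _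
  have hbias : b ^ 2 ≤ (L : ℝ) * (∫ x, q x ∂μ) ^ 2 := by
    have habs : |b| ≤ Real.sqrt L * ∫ x, q x ∂μ := by
      rw [hb, hmt, hms, ← integral_sub hgint hhint]
      have habs0 : |∫ x, (g x - h x) ∂μ| ≤ ∫ x, |g x - h x| ∂μ := by
        simpa [Real.norm_eq_abs] using
          norm_integral_le_integral_norm (μ := μ) (f := fun x => g x - h x)
      refine habs0.trans ?_
      calc ∫ x, |g x - h x| ∂μ ≤ ∫ x, Real.sqrt L * q x ∂μ := by
            refine integral_mono (hgint.sub hhint).abs (hqint.const_mul _) hpoint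
        _ = Real.sqrt L * ∫ x, q x ∂μ := MeasureTheory.integral_const_mul _ _
    calc b ^ 2 = |b| ^ 2 := (sq_abs b).symm
      _ ≤ (Real.sqrt L * ∫ x, q x ∂μ) ^ 2 := by
          exact pow_le_pow_left₀ (abs_nonneg _) habs 2
      _ = (L : ℝ) * (∫ x, q x ∂μ) ^ 2 := by
          rw [mul_pow, Real.sq_sqrt (Nat.cast_nonneg L)]
  calc ∫ S : Fin N → 𝒳, ((N : ℝ)⁻¹ * ∑ n, g (S n) - ms) ^ 2 ∂PiM
      = (N : ℝ)⁻¹ * variance g μ + b ^ 2 := hdecomp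
    _ ≤ (N : ℝ)⁻¹ * variance g μ + (L : ℝ) * (∫ x, q x ∂μ) ^ 2 := by
        exact add_le_add le_rfl hbias
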